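/- Suppose n ∈ {3,4,5,6} and w : (0,R) → ℝ satisfies ((n²+n+2)/8)·r ≤ w(r) ≤ ((n²+5n+2)/12)·r for r ∈ (0,R). Then 1/2 ≤ (n − w(r)/r)/(w(r)/r − (n²−3n+2)/4) ≤ 1 for all r ∈ (0,R). In particular G_n(r,w(r)) ≥ (w(r)/(2r))(1+w(r)²) ≥ 0, so any solution u of u'' = G_n(r,u') with u' = w is convex. -/

import Mathlib

open Real

/-- The speed function `G_n(x,y)` for the harmonic-mean-type flow. -/
noncomputable def Gn (n : ℕ) (x y : ℝ) : ℝ :=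
  (y / x) * (1 + y ^ 2) *
    (((n : ℝ) - y / x) / (y / x - ((n : ℝ) ^ 2 - 3 * n + 2) / 4))

/-- for `n ∈ {3,4,5,6}` and `w` pinched between the linear barriers
`((n²+n+2)/8) r` and `((n²+5n+2)/12) r` on `(0,R)`, one has
`1/2 ≤ (n − w/r)/(w/r − (n²−3n+2)/4) ≤ 1`; in particular
`G_n(r,w(r)) ≥ (w/(2r))(1+w²) ≥ 0`, so any solution `u` of `u'' = G_n(r,u')`
with `u' = w` is convex. -/
theorem stmt13 (n : ℕ) (hn : 3 ≤ n) (hn' : n ≤ 6) (R : ℝ) (w : ℝ → ℝ)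
    (hlow : ∀ r ∈ Set.Ioo (0 : ℝ) R, (((n : ℝ) ^ 2 + n + 2) / 8) * r ≤ w r)
    (hupp : ∀ r ∈ Set.Ioo (0 : ℝ) R, w r ≤ (((n : ℝ) ^ 2 + 5 * n + 2) / 12) * r) :
    ∀ r ∈ Set.Ioo (0 : ℝ) R,
      ((1 : ℝ) / 2 ≤ ((n : ℝ) - w r / r) / (w r / r - ((n : ℝ) ^ 2 - 3 * n + 2) / 4) ∧
        ((n : ℝ) - w r / r) / (w r / r - ((n : ℝ) ^ 2 - 3 * n + 2) / 4) ≤ 1) ∧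
      (w r / (2 * r)) * (1 + w r ^ 2) ≤ Gn n r (w r) ∧
      0 ≤ (w r / (2 * r)) * (1 + w r ^ 2) ∧
      (∀ u : ℝ → ℝ, (∀ s ∈ Set.Ioo (0 : ℝ) R, deriv u s = w s) →
        deriv (deriv u) r = Gn n r (deriv u r) → 0 ≤ deriv (deriv u) r) := by

  intro r hr
  obtain ⟨hr0, hrR⟩ := hr
  have hN : (3 : ℝ) ≤ (n : ℝ) := by exact_mod_cast hn
  have hN' : (n : ℝ) ≤ 6 := by exact_mod_cast hn'
  have hlo := hlow r ⟨hr0, hrR⟩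
  have hup := hupp r ⟨hr0, hrR⟩
  set t : ℝ := w r / r with ht
  have ht_low : (((n : ℝ) ^ 2 + n + 2) / 8) ≤ t := (le_div_iff₀ hr0).2 hlo
  have ht_up : t ≤ (((n : ℝ) ^ 2 + 5 * n + 2) / 12) := (div_le_iff₀ hr0).2 hup
  have hden : 0 < t - ((n : ℝ) ^ 2 - 3 * n + 2) / 4 := by nlinarith
  have hb1 : (1 : ℝ) / 2 ≤ ((n : ℝ) - t) / (t - ((n : ℝ) ^ 2 - 3 * n + 2) / 4) := by
    rw [le_div_iff₀ hden]; nlinarith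
  have hb2 : ((n : ℝ) - t) / (t - ((n : ℝ) ^ 2 - 3 * n + 2) / 4) ≤ 1 := by
    rw [div_le_one hden]; nlinarith
  have hw0 : 0 < w r := by nlinarith
  have ht0 : 0 < t := div_pos hw0 hr0
  have hGn : Gn n r (w r)
      = t * (1 + w r ^ 2) * (((n : ℝ) - t) / (t - ((n : ℝ) ^ 2 - 3 * n + 2) / 4)) := rfl
  have hkey : (w r / (2 * r)) * (1 + w r ^ 2) ≤ Gn n r (w r) := by
    rw [hGn]
    have h1 : (w r / (2 * r)) * (1 + w r ^ 2) = t * (1 + w r ^ 2) * (1 / 2) := by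
      field_simp [ht]; ring
      rw [ht]; field_simp
    rw [h1]
    have hpos : 0 ≤ t * (1 + w r ^ 2) := by positivity
    exact mul_le_mul_of_nonneg_left hb1 hpos
  have hnn : 0 ≤ (w r / (2 * r)) * (1 + w r ^ 2) := by positivity
  refine ⟨⟨hb1, hb2⟩, hkey, hnn, ?_⟩
  intro u hu hu2
  rw [hu2, hu r ⟨hr0, hrR⟩]
  exact le_trans hnn hkey
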